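/- Let w̄_∞ be a unit vector achieving margin γ > 0 on all data points x_n (⟨w̄_∞, x_n⟩ ≥ γ with equality exactly on a subset S with full-row-rank X_S). If w_t / ‖w_t‖ → w̄_∞ and L(w_t) → 0 for the exponential loss L(w) = ∑_n exp(-⟨w,x_n⟩), then every accumulation point z of the normalized negative gradients -∇L(w_t)/‖∇L(w_t)‖ has the form z = ∑_{n∈S} α_n x_n for some coefficients α_n ≥ 0. -/

import Mathlib

open Filter Topology Finset
open scoped RealInnerProductSpace BigOperators

noncomputable section

abbrev Euc (d : ℕ) := EuclideanSpace ℝ (Fin d)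

/-- `N` is a norm on `ℝ^d`. -/
def IsNorm {d : ℕ} (N : Euc d → ℝ) : Prop :=
  (∀ v, N v = 0 ↔ v = 0) ∧ (∀ (c : ℝ) (v), N (c • v) = |c| * N v) ∧
  (∀ v w, N (v + w) ≤ N v + N w)

/-- Dual norm `‖y‖_* = sup_{‖v‖ ≤ 1} ⟨y, v⟩`. -/
def dualNorm {d : ℕ} (N : Euc d → ℝ) (y : Euc d) : ℝ :=
  sSup {s | ∃ v, N v ≤ 1 ∧ s = ⟪y, v⟫}

/-- Exponential-loss empirical objective `L(w) = ∑ n exp(-⟨w, x_n⟩)`. -/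
def expLoss {d N : ℕ} (x : Fin N → Euc d) (u : Euc d) : ℝ :=
  ∑ n, Real.exp (-⟪u, x n⟫)

/-- Negative gradient of the exponential loss: `-∇L(w) = ∑ n exp(-⟨w,x_n⟩) x_n`. -/
def negGrad {d N : ℕ} (x : Fin N → Euc d) (u : Euc d) : Euc d :=
  ∑ n, Real.exp (-⟪u, x n⟫) • x n
set_option maxHeartbeats 1000000 in
/-- if `w_t/‖w_t‖ → w̄` (a unit vector with margin `γ > 0`, attained exactly
on a linearly independent support set `S`) and `L(w_t) → 0` for the exponential loss, then
every accumulation point of the normalized negative gradients `-∇L(w_t)/‖∇L(w_t)‖` is a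
nonnegative combination of the support vectors. -/
theorem accumulation_points_nonneg_combination_support {d N : ℕ}
    (x : Fin N → Euc d) (wbar : Euc d) (hwbar : ‖wbar‖ = 1)
    (γ : ℝ) (hγ : 0 < γ) (hmargin : ∀ n, γ ≤ ⟪wbar, x n⟫)
    (S : Finset (Fin N)) (hS : ∀ n, n ∈ S ↔ ⟪wbar, x n⟫ = γ) (hSne : S.Nonempty)
    (hrank : LinearIndependent ℝ (fun n : S => x n))
    (w : ℕ → Euc d)
    (hdir : Tendsto (fun t => ‖w t‖⁻¹ • w t) atTop (𝓝 wbar))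
    (hloss : Tendsto (fun t => expLoss x (w t)) atTop (𝓝 0)) :
    ∀ z : Euc d,
      MapClusterPt z atTop (fun t => ‖negGrad x (w t)‖⁻¹ • negGrad x (w t)) →
        ∃ α : Fin N → ℝ, (∀ n, 0 ≤ α n) ∧ z = ∑ n ∈ S, α n • x n := by
  intro z hz
  obtain ⟨n₀, hn₀⟩ := hSne
  have hm0 : ⟪wbar, x n₀⟫ = γ := (hS n₀).1 hn₀
  set c : ℕ → Fin N → ℝ := fun t n => Real.exp (-⟪w t, x n⟫) with hc
  have hcpos : ∀ t n, 0 < c t n := fun t n => Real.exp_pos _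
  have hng : ∀ t, negGrad x (w t) = ∑ n, c t n • x n := fun t => rfl
  have hsum_pos : ∀ t, 0 < ∑ n, c t n := fun t =>
    Finset.sum_pos (fun n _ => hcpos t n) ⟨n₀, Finset.mem_univ n₀⟩
  have hGlow : ∀ t, γ * ∑ n, c t n ≤ ‖negGrad x (w t)‖ := by
    intro t
    have h1 : γ * ∑ n, c t n ≤ ⟪wbar, negGrad x (w t)⟫ := by
      rw [hng t, inner_sum, Finset.mul_sum]
      apply Finset.sum_le_sum
      intro n _
      rw [real_inner_smul_right]
      nlinarith [hcpos t n, hmargin n]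
    calc γ * ∑ n, c t n ≤ ⟪wbar, negGrad x (w t)⟫ := h1
      _ ≤ ‖wbar‖ * ‖negGrad x (w t)‖ := real_inner_le_norm _ _
      _ = ‖negGrad x (w t)‖ := by rw [hwbar, one_mul]
  have hGpos : ∀ t, 0 < ‖negGrad x (w t)‖ := fun t =>
    lt_of_lt_of_le (mul_pos hγ (hsum_pos t)) (hGlow t)
  set a : ℕ → Fin N → ℝ := fun t n => c t n / ‖negGrad x (w t)‖ with ha
  have hanonneg : ∀ t n, 0 ≤ a t n := fun t n =>
    div_nonneg (hcpos t n).le (hGpos t).le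
  have haub : ∀ t n, a t n ≤ γ⁻¹ := by
    intro t n
    rw [ha]
    rw [div_le_iff₀ (hGpos t)]
    calc c t n ≤ ∑ m, c t m :=
          Finset.single_le_sum (fun m _ => (hcpos t m).le) (Finset.mem_univ n)
      _ = γ⁻¹ * (γ * ∑ m, c t m) := by field_simp
      _ ≤ γ⁻¹ * ‖negGrad x (w t)‖ := by
          have := hGlow t
          have hγi : 0 ≤ γ⁻¹ := by positivity
          nlinarith
  have hgdef : ∀ t, ‖negGrad x (w t)‖⁻¹ • negGrad x (w t) = ∑ n, a t n • x n := by
    intro t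
    have h2 : (∑ n, a t n • x n) = ‖negGrad x (w t)‖⁻¹ • ∑ n, c t n • x n := by
      rw [Finset.smul_sum]
      refine Finset.sum_congr rfl fun n _ => ?_
      rw [smul_smul]
      simp only [ha]
      rw [div_eq_inv_mul]
    rw [h2, ← hng t]
  -- ‖w t‖ → ∞
  have hterm0 : Tendsto (fun t => Real.exp (-⟪w t, x n₀⟫)) atTop (𝓝 0) := by
    refine squeeze_zero (fun t => (Real.exp_pos _).le) (fun t => ?_) hloss
    exact Finset.single_le_sum (f := fun n => Real.exp (-⟪w t, x n⟫))
      (fun n _ => (Real.exp_pos _).le) (Finset.mem_univ n₀)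
  have hterm : Tendsto (fun t => ⟪w t, x n₀⟫) atTop atTop := by
    have h := Real.tendsto_exp_comp_nhds_zero.mp hterm0
    exact tendsto_neg_atBot_iff.mp h
  have hxpos : 0 < ‖x n₀‖ := by
    rcases eq_or_ne (x n₀) 0 with h | h
    · rw [h, inner_zero_right] at hm0; linarith
    · exact norm_pos_iff.mpr h
  have hwnorm : Tendsto (fun t => ‖w t‖) atTop atTop := by
    refine tendsto_atTop_mono (fun t => ?_) (hterm.atTop_div_const hxpos)
    rw [div_le_iff₀ hxpos]
    exact (real_inner_le_norm _ _).trans (le_of_eq (by ring))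
  -- coefficients outside S tend to zero
  have hnotS : ∀ n, n ∉ S → Tendsto (fun t => a t n) atTop (𝓝 0) := by
    intro n hn
    have hgt : γ < ⟪wbar, x n⟫ :=
      lt_of_le_of_ne (hmargin n) (fun h => hn ((hS n).mpr h.symm))
    have hu : Tendsto (fun t => ⟪‖w t‖⁻¹ • w t, x n₀ - x n⟫) atTop
        (𝓝 (γ - ⟪wbar, x n⟫)) := by
      have hcont : Continuous fun v : Euc d => ⟪v, x n₀ - x n⟫ :=
        continuous_id.inner continuous_const
      have := (hcont.tendsto wbar).comp hdir
      simpa [Function.comp_def, inner_sub_right, hm0] using this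
    have hprod : Tendsto (fun t => ‖w t‖ * ⟪‖w t‖⁻¹ • w t, x n₀ - x n⟫) atTop atBot :=
      hwnorm.atTop_mul_neg (by linarith) hu
    have hexp : Tendsto (fun t => Real.exp (‖w t‖ * ⟪‖w t‖⁻¹ • w t, x n₀ - x n⟫))
        atTop (𝓝 0) := Real.tendsto_exp_atBot.comp hprod
    have hbnd : ∀ᶠ t in atTop, a t n ≤
        γ⁻¹ * Real.exp (‖w t‖ * ⟪‖w t‖⁻¹ • w t, x n₀ - x n⟫) := by
      filter_upwards [hwnorm.eventually_ge_atTop 1] with t ht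
      have hwt : ‖w t‖ ≠ 0 := by linarith
      have key : ‖w t‖ * ⟪‖w t‖⁻¹ • w t, x n₀ - x n⟫ = ⟪w t, x n₀ - x n⟫ := by
        rw [real_inner_smul_left]
        field_simp
      have hGc : γ * c t n₀ ≤ ‖negGrad x (w t)‖ := by
        refine le_trans ?_ (hGlow t)
        have : c t n₀ ≤ ∑ m, c t m :=
          Finset.single_le_sum (fun m _ => (hcpos t m).le) (Finset.mem_univ n₀)
        nlinarith
      have hstep : a t n ≤ c t n / (γ * c t n₀) := by
        rw [ha]
        exact div_le_div_of_nonneg_left (hcpos t n).le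
          (by positivity) hGc
      refine hstep.trans (le_of_eq ?_)
      rw [key, inner_sub_right, Real.exp_sub, hc]
      simp only []
      rw [Real.exp_neg, Real.exp_neg]
      have e1 := Real.exp_ne_zero ⟪w t, x n⟫
      have e2 := Real.exp_ne_zero ⟪w t, x n₀⟫
      field_simp
    have hlim : Tendsto (fun t =>
        γ⁻¹ * Real.exp (‖w t‖ * ⟪‖w t‖⁻¹ • w t, x n₀ - x n⟫)) atTop (𝓝 0) := by
      have := hexp.const_mul γ⁻¹
      simpa using this
    exact squeeze_zero' (Filter.Eventually.of_forall fun t => hanonneg t n) hbnd hlim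
  -- subsequence converging to z
  obtain ⟨ψ, hψ, hψt⟩ := TopologicalSpace.FirstCountableTopology.tendsto_subseq hz
  have hmemIcc : ∀ t, a t ∈ Set.Icc (0 : Fin N → ℝ) (fun _ => γ⁻¹) := by
    intro t
    constructor
    · intro n; exact hanonneg t n
    · intro n; exact haub t n
  have hcomp : IsCompact (Set.Icc (0 : Fin N → ℝ) (fun _ => γ⁻¹)) := isCompact_Icc
  obtain ⟨α, hαmem, φ, hφ, hφt⟩ :=
    hcomp.tendsto_subseq (x := fun k => a (ψ k)) (fun k => hmemIcc (ψ k))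
  -- the limit along the doubly-extracted subsequence
  have hsumcont : Continuous fun β : Fin N → ℝ => ∑ n, β n • x n :=
    continuous_finset_sum _ fun n _ => (continuous_apply n).smul continuous_const
  have hlim1 : Tendsto (fun k => ∑ n, a (ψ (φ k)) n • x n) atTop (𝓝 (∑ n, α n • x n)) :=
    (hsumcont.tendsto α).comp hφt
  have hlim2 : Tendsto (fun k => ∑ n, a (ψ (φ k)) n • x n) atTop (𝓝 z) := by
    have h1 : Tendsto (fun k =>
        ‖negGrad x (w (ψ (φ k)))‖⁻¹ • negGrad x (w (ψ (φ k)))) atTop (𝓝 z) :=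
      hψt.comp hφ.tendsto_atTop
    refine h1.congr fun k => ?_
    exact hgdef (ψ (φ k))
  have hz_eq : z = ∑ n, α n • x n := tendsto_nhds_unique hlim2 hlim1
  have hα0 : ∀ n, n ∉ S → α n = 0 := by
    intro n hn
    have h1 : Tendsto (fun k => a (ψ (φ k)) n) atTop (𝓝 (α n)) :=
      ((continuous_apply n).tendsto α).comp hφt
    have h2 : Tendsto (fun k => a (ψ (φ k)) n) atTop (𝓝 0) :=
      (hnotS n hn).comp ((hψ.comp hφ).tendsto_atTop)
    exact tendsto_nhds_unique h1 h2
  refine ⟨α, fun n => hαmem.1 n, ?_⟩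
  rw [hz_eq]
  refine (Finset.sum_subset (Finset.subset_univ S) fun n _ hn => ?_).symm
  rw [hα0 n hn, zero_smul]

end
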